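/- Contracting the arrangement 𝒜₂ (with non-coplanar lines L₁, L₂, L₃, m generic planes through each) along a plane H through L₁ yields an arrangement in H ≅ ℂ² in which m−1 of the lines coincide with L₁ and the other 2m lines are pairwise distinct and distinct from L₁; for this contracted arrangement ρ = 2m and the unique large direction is L₁, so dim(C_{𝒜/H,−2m})₁ = 1. -/

import Mathlib

open MvPolynomial

/-- The directional derivative ∂_h on polynomials on ℂᵈ. -/
noncomputable def dirDeriv {d : ℕ} (h : Fin d → ℂ) :
    Module.End ℂ (MvPolynomial (Fin d) ℂ) :=
  ∑ i, h i • (pderiv i).toLinearMap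

open Classical in
/-- ρ_𝒜(h): the number of hyperplanes of the arrangement not containing `h`. -/
noncomputable def rhoA {d : ℕ} {ι : Type*} [Fintype ι]
    (L : ι → ((Fin d → ℂ) →ₗ[ℂ] ℂ)) (h : Fin d → ℂ) : ℕ :=
  (Finset.univ.filter fun i => L i h ≠ 0).card

/-- The degree-1 graded component of the inverse system C_{𝒜,k}. -/
noncomputable def Cdeg1 {d : ℕ} {ι : Type*} [Fintype ι]
    (L : ι → ((Fin d → ℂ) →ₗ[ℂ] ℂ)) (k : ℤ) :
    Submodule ℂ (MvPolynomial (Fin d) ℂ) :=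
  (homogeneousSubmodule (Fin d) ℂ 1) ⊓
    ⨅ (h : Fin d → ℂ) (_ : h ≠ 0),
      LinearMap.ker (dirDeriv h ^ (((rhoA L h : ℤ) + k + 1).toNat))

lemma kerB (g : (Fin 2 → ℂ) →ₗ[ℂ] ℂ) (hg : g ≠ 0) (v : Fin 2 → ℂ) (hv : v ≠ 0)
    (hgv : g v = 0) : LinearMap.ker g = Submodule.span ℂ {v} := by
  have hk : Module.finrank ℂ (LinearMap.ker g) = 1 := by
    have := Module.Dual.finrank_ker_add_one_of_ne_zero (f := g) hg
    simp [Module.finrank_fintype_fun_eq_card] at this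
    omega
  have hle : Submodule.span ℂ {v} ≤ LinearMap.ker g := by
    rw [Submodule.span_le]; simpa using hgv
  exact (Submodule.eq_of_le_of_finrank_le hle (by rw [hk, finrank_span_singleton hv])).symm

lemma dirDeriv_apply {d : ℕ} (h : Fin d → ℂ) (q : MvPolynomial (Fin d) ℂ) :
    dirDeriv h q = ∑ i, h i • pderiv i q := by
  simp [dirDeriv, LinearMap.sum_apply]

lemma dirDeriv_C (h : Fin 2 → ℂ) (c : ℂ) : dirDeriv h (C c) = 0 := by
  simp [dirDeriv_apply]

lemma pderiv_mono (i j : Fin 2) (a : ℂ) :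
    pderiv i (monomial (Finsupp.single j 1) a) = if i = j then C a else 0 := by
  rw [pderiv_monomial]
  by_cases h : i = j
  · subst h
    rw [if_pos rfl, Finsupp.single_eq_same, Nat.cast_one, mul_one, tsub_self, C_apply]
  · simp [h, Finsupp.single_apply, Ne.symm h]

lemma dirDeriv_rep (h : Fin 2 → ℂ) (a b : ℂ) :
    dirDeriv h (monomial (Finsupp.single 0 1) a + monomial (Finsupp.single 1 1) b)
      = C (h 0 * a + h 1 * b) := by
  simp only [dirDeriv_apply, Fin.sum_univ_two, map_add, pderiv_mono, smul_add]
  norm_num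
  rw [smul_eq_C_mul, smul_eq_C_mul, ← C_mul, ← C_mul, ← C_add]

lemma single01_ne : (Finsupp.single (0 : Fin 2) (1:ℕ)) ≠ Finsupp.single 1 1 := by
  intro he
  have := DFunLike.congr_fun he 0
  simp [Finsupp.single_apply] at this

lemma p_ne (u : Fin 2 → ℂ) (hu : u ≠ 0) :
    (monomial (Finsupp.single 0 1) (u 1) + monomial (Finsupp.single 1 1) (-(u 0))
      : MvPolynomial (Fin 2) ℂ) ≠ 0 := by
  intro h
  apply hu
  have h0 := congrArg (coeff (Finsupp.single 0 1)) h
  have h1 := congrArg (coeff (Finsupp.single 1 1)) h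
  simp [coeff_monomial, single01_ne, Ne.symm single01_ne] at h0 h1
  funext i; fin_cases i <;> simp [h1, h0]

lemma homog1_rep (q : MvPolynomial (Fin 2) ℂ) (hq : q.IsHomogeneous 1) :
    q = monomial (Finsupp.single 0 1) (coeff (Finsupp.single 0 1) q)
      + monomial (Finsupp.single 1 1) (coeff (Finsupp.single 1 1) q) := by
  have h01 := single01_ne
  ext d
  have hcases : d = Finsupp.single 0 1 ∨ d = Finsupp.single 1 1 ∨ coeff d q = 0 := by
    by_cases hc : coeff d q = 0
    · tauto
    · have hdeg := hq hc
      have hsum : d 0 + d 1 = 1 := by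
        have h1 : ∑ i : Fin 2, d i = 1 := by
          rw [Pi.one_def, ← Finsupp.degree_eq_weight_one] at hdeg
          rw [← hdeg, Finsupp.degree_apply]
          exact (Finset.sum_subset (Finset.subset_univ _)
            (fun i _ hi => Finsupp.notMem_support_iff.mp hi)).symm
        simpa [Fin.sum_univ_two] using h1
      rcases Nat.eq_zero_or_pos (d 0) with h0 | h0
      · right; left
        ext i; fin_cases i <;> simp [Finsupp.single_apply] <;> omega
      · left
        ext i; fin_cases i <;> simp [Finsupp.single_apply] <;> omega
  simp only [coeff_add, coeff_monomial]
  rcases hcases with rfl | rfl | hc0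
  · simp [Ne.symm h01]
  · simp [h01]
  · rw [hc0]
    by_cases e0 : Finsupp.single (0:Fin 2) 1 = d
    · subst e0; simp [hc0, Ne.symm h01]
    by_cases e1 : Finsupp.single (1:Fin 2) 1 = d
    · subst e1; simp [hc0, e0]
    simp [e0, e1]

/-- the contraction of the non-coplanar three-lines arrangement along a
plane H through L₁ is an arrangement of 3m−1 lines in H ≅ ℂ² in which m−1 lines equal
L₁ (spanned by u) and the other 2m lines are pairwise distinct and differ from L₁;
then ρ = 2m, achieved exactly on L₁, and dim (C_{𝒜/H,−2m})₁ = 1. -/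
theorem stmt_13 (m : ℕ) (hm : 3 ≤ m)
    (g : Fin (3 * m - 1) → ((Fin 2 → ℂ) →ₗ[ℂ] ℂ)) (hg : ∀ i, g i ≠ 0)
    (u : Fin 2 → ℂ) (hu : u ≠ 0)
    (S : Finset (Fin (3 * m - 1))) (hcard : S.card = m - 1)
    (hS : ∀ i, i ∈ S ↔ g i u = 0)
    (hdistinct : ∀ i j, i ∉ S → j ∉ S → i ≠ j →
      LinearMap.ker (g i) ≠ LinearMap.ker (g j)) :
    (∀ h : Fin 2 → ℂ, h ≠ 0 → 2 * m ≤ rhoA g h) ∧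
    (∀ h : Fin 2 → ℂ, h ≠ 0 →
      (rhoA g h = 2 * m ↔ h ∈ Submodule.span ℂ {u})) ∧
    Module.finrank ℂ (Cdeg1 g (-(2 * m : ℤ))) = 1 := by
  classical
  have hspan : ∀ h : Fin 2 → ℂ, h ∈ Submodule.span ℂ {u} → h ≠ 0 → rhoA g h = 2 * m := by
    intro h hmem hne
    obtain ⟨c, rfl⟩ := Submodule.mem_span_singleton.mp hmem
    have hc : c ≠ 0 := by rintro rfl; simp at hne
    have hfil : (Finset.univ.filter fun i => g i (c • u) ≠ 0) = Sᶜ := by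
      ext i
      simp only [Finset.mem_filter, Finset.mem_univ, true_and, Finset.mem_compl, hS,
        map_smul, smul_eq_mul, mul_ne_zero_iff]
      tauto
    rw [rhoA, hfil, Finset.card_compl, hcard]
    simp only [Fintype.card_fin]
    omega
  have hout : ∀ h : Fin 2 → ℂ, h ∉ Submodule.span ℂ {u} → h ≠ 0 → 2 * m + 1 ≤ rhoA g h := by
    intro h hmem hne
    have key : ∀ i, g i h = 0 → i ∉ S := by
      intro i hih hiS
      exact hmem ((kerB (g i) (hg i) u hu ((hS i).mp hiS)) ▸ (LinearMap.mem_ker.mpr hih))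
    have hsub : ((Finset.univ.filter fun i => g i h = 0)).card ≤ 1 := by
      apply Finset.card_le_one.mpr
      intro i hi j hj
      simp only [Finset.mem_filter] at hi hj
      by_contra hij
      exact hdistinct i j (key i hi.2) (key j hj.2) hij
        ((kerB (g i) (hg i) h hne hi.2).trans (kerB (g j) (hg j) h hne hj.2).symm)
    have htot := Finset.card_filter_add_card_filter_not
      (s := (Finset.univ : Finset (Fin (3 * m - 1)))) (p := fun i => g i h = 0)
    simp only [Finset.card_univ, Fintype.card_fin] at htot
    rw [rhoA]
    have : (Finset.univ.filter fun i => ¬ g i h = 0).card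
        = (Finset.univ.filter fun i => g i h ≠ 0).card := rfl
    omega
  have part1 : ∀ h : Fin 2 → ℂ, h ≠ 0 → 2 * m ≤ rhoA g h := by
    intro h hne
    by_cases hmem : h ∈ Submodule.span ℂ {u}
    · exact (hspan h hmem hne).ge
    · exact le_of_lt (Nat.lt_of_lt_of_le (Nat.lt_succ_self _) (hout h hmem hne))
  refine ⟨part1, fun h hne => ⟨fun he => ?_, fun hmem => hspan h hmem hne⟩, ?_⟩
  · by_contra hmem
    have := hout h hmem hne
    omega
  · -- part 3
    set p : MvPolynomial (Fin 2) ℂ :=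
      monomial (Finsupp.single 0 1) (u 1) + monomial (Finsupp.single 1 1) (-(u 0)) with hp
    have hCp : Cdeg1 g (-(2 * m : ℤ)) = Submodule.span ℂ {p} := by
      apply le_antisymm
      · intro q hq
        rw [Cdeg1, Submodule.mem_inf] at hq
        obtain ⟨hq1, hq2⟩ := hq
        rw [Submodule.mem_iInf] at hq2
        have hq2u := hq2 u
        rw [Submodule.mem_iInf] at hq2u
        have hq2u := hq2u hu
        have hru : rhoA g u = 2 * m := hspan u (Submodule.mem_span_singleton_self u) hu
        have hexp : (((rhoA g u : ℤ)) + (-(2 * m : ℤ)) + 1).toNat = 1 := by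
          rw [hru]; omega
        rw [hexp, pow_one, LinearMap.mem_ker] at hq2u
        have hq1' : q.IsHomogeneous 1 := (mem_homogeneousSubmodule _ _).mp hq1
        set a := coeff (Finsupp.single 0 1) q with ha
        set b := coeff (Finsupp.single 1 1) q with hb
        have hrep := homog1_rep q hq1'
        have hd0 : (C (u 0 * a + u 1 * b) : MvPolynomial (Fin 2) ℂ) = 0 := by
          rw [← dirDeriv_rep u a b, ← hrep]; exact hq2u
        have hrel : u 0 * a + u 1 * b = 0 := by
          have := C_injective (Fin 2) ℂ
          exact this (by simpa using hd0)
        rw [Submodule.mem_span_singleton]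
        by_cases hu1 : u 1 = 0
        · have hu0 : u 0 ≠ 0 := by
            intro hu0
            apply hu; funext i; fin_cases i <;> simp [hu0, hu1]
          have ha0 : a = 0 := by
            rw [hu1, zero_mul, add_zero, mul_eq_zero] at hrel
            tauto
          refine ⟨-b / u 0, ?_⟩
          rw [hrep, hp, smul_add, smul_monomial, smul_monomial, smul_eq_mul, smul_eq_mul,
            ← ha, ← hb]
          rw [show (-b / u 0) * u 1 = a by rw [hu1, ha0]; ring,
            show (-b / u 0) * (-(u 0)) = b by field_simp]
        · refine ⟨a / u 1, ?_⟩
          rw [hrep, hp, smul_add, smul_monomial, smul_monomial, smul_eq_mul, smul_eq_mul,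
            ← ha, ← hb]
          rw [show (a / u 1) * u 1 = a by field_simp,
            show (a / u 1) * (-(u 0)) = b by field_simp; linear_combination -hrel]
      · rw [Submodule.span_le, Set.singleton_subset_iff]
        refine ⟨?_, ?_⟩
        · rw [SetLike.mem_coe, mem_homogeneousSubmodule]
          apply MvPolynomial.IsHomogeneous.add <;>
            exact isHomogeneous_monomial _ (by
              simp [Finsupp.degree_single, Finsupp.support_single_ne_zero])
        · rw [SetLike.mem_coe, Submodule.mem_iInf]
          intro h
          rw [Submodule.mem_iInf]
          intro hne
          rw [LinearMap.mem_ker]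
          set e := (((rhoA g h : ℤ)) + (-(2 * m : ℤ)) + 1).toNat with hedef
          by_cases hmem : h ∈ Submodule.span ℂ {u}
          · have hr : rhoA g h = 2 * m := hspan h hmem hne
            have he1 : e = 1 := by rw [hedef, hr]; omega
            rw [he1, pow_one]
            obtain ⟨c, rfl⟩ := Submodule.mem_span_singleton.mp hmem
            rw [hp, dirDeriv_rep]
            have : (c • u) 0 * u 1 + (c • u) 1 * (-(u 0)) = 0 := by
              simp [Pi.smul_apply, smul_eq_mul]; ring
            rw [this, map_zero]
          · have hr := hout h hmem hne
            obtain ⟨e', he'⟩ : ∃ e', e = e' + 2 := ⟨e - 2, by rw [hedef]; omega⟩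
            rw [he', pow_succ, Module.End.mul_apply, hp, dirDeriv_rep,
              pow_succ, Module.End.mul_apply, dirDeriv_C, map_zero]
    rw [hCp, finrank_span_singleton (p_ne u hu)]
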